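/- The derivative of the realization probability p_b with respect to p, evaluated at p = 0, vanishes unless b is the all-zero string or b contains exactly one maximal run of consecutive 1s; for the all-zero string it equals -[m(1-κ)+1], and for a string consisting of i zeros, then ℓ ≥ 1 consecutive ones, then k = m+1-i-ℓ zeros, it equals (1-κ)^{2 - δ_{i,0} - δ_{k,0}} · κ^{ℓ-1}. -/

import Mathlib

def T (p κ : ℝ) : Matrix (Fin 2) (Fin 2) ℝ :=
  !![κ + (1-κ)*(1-p), (1-κ)*(1-p); (1-κ)*p, κ + (1-κ)*p]

def pb (p κ : ℝ) (m : ℕ) (b : Fin (m+1) → Fin 2) : ℝ :=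
  (if b 0 = 0 then 1 - p else p) * ∏ t : Fin m, T p κ (b t.succ) (b t.castSucc)

/-- The bitstring `0^i 1^ℓ 0^(m+1-i-ℓ)`: a single run of `ℓ` ones starting at `i`. -/
def run (m i ℓ : ℕ) : Fin (m+1) → Fin 2 :=
  fun t => if i ≤ (t : ℕ) ∧ (t : ℕ) < i + ℓ then 1 else 0

open Finset

lemma fin2_cases (v : Fin 2) : v = 0 ∨ v = 1 := by omega

/-- Constant term (value at `p = 0`) of each affine-in-`p` factor of `pb`. -/
noncomputable def Af (κ : ℝ) {m : ℕ} (b : Fin (m+1) → Fin 2) : Fin (m+1) → ℝ :=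
  Fin.cases (if b 0 = 1 then 0 else 1)
    (fun t => (if b t.succ = b t.castSucc then κ else 0) +
      (1-κ) * (if b t.succ = 1 then 0 else 1))

/-- Linear coefficient of each affine-in-`p` factor of `pb`. -/
noncomputable def Cf (κ : ℝ) {m : ℕ} (b : Fin (m+1) → Fin 2) : Fin (m+1) → ℝ :=
  Fin.cases (if b 0 = 1 then 1 else -1)
    (fun t => (1-κ) * (if b t.succ = 1 then 1 else -1))

lemma Af_zero (κ : ℝ) {m : ℕ} (b : Fin (m+1) → Fin 2) :
    Af κ b 0 = if b 0 = 1 then 0 else 1 := rfl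

lemma Af_succ (κ : ℝ) {m : ℕ} (b : Fin (m+1) → Fin 2) (t : Fin m) :
    Af κ b t.succ = (if b t.succ = b t.castSucc then κ else 0) +
      (1-κ) * (if b t.succ = 1 then 0 else 1) := by
  simp [Af]

lemma Cf_zero (κ : ℝ) {m : ℕ} (b : Fin (m+1) → Fin 2) :
    Cf κ b 0 = if b 0 = 1 then 1 else -1 := rfl

lemma Cf_succ (κ : ℝ) {m : ℕ} (b : Fin (m+1) → Fin 2) (t : Fin m) :
    Cf κ b t.succ = (1-κ) * (if b t.succ = 1 then 1 else -1) := by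
  simp [Cf]

lemma pb_eq (p κ : ℝ) (m : ℕ) (b : Fin (m+1) → Fin 2) :
    pb p κ m b = ∏ j : Fin (m+1), (Af κ b j + Cf κ b j * p) := by
  rw [Fin.prod_univ_succ]
  unfold pb
  congr 1
  · rw [Af_zero, Cf_zero]
    rcases fin2_cases (b 0) with h | h <;> simp [h] <;> ring
  · apply Finset.prod_congr rfl
    intro t _
    rw [Af_succ, Cf_succ]
    rcases fin2_cases (b t.succ) with h1 | h1 <;> rcases fin2_cases (b t.castSucc) with h2 | h2 <;>
      simp [h1, h2, T, Matrix.cons_val_zero, Matrix.cons_val_one, Matrix.head_cons] <;> ring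

lemma deriv_pb (κ : ℝ) (m : ℕ) (b : Fin (m+1) → Fin 2) :
    deriv (fun p => pb p κ m b) 0
      = ∑ j : Fin (m+1), Cf κ b j * ∏ l ∈ Finset.univ.erase j, Af κ b l := by
  have h : ∀ j ∈ (univ : Finset (Fin (m+1))),
      HasDerivAt (fun p => Af κ b j + Cf κ b j * p) (Cf κ b j) 0 := by
    intro j _
    simpa using ((hasDerivAt_id (0:ℝ)).const_mul (Cf κ b j)).const_add (Af κ b j)
  have H := HasDerivAt.fun_finsetProd h
  have hfun : (fun p => pb p κ m b)
      = (fun p => ∏ j ∈ (univ : Finset (Fin (m+1))), (Af κ b j + Cf κ b j * p)) := by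
    funext p; rw [pb_eq]
  rw [hfun, H.deriv]
  refine Finset.sum_congr rfl fun j _ => ?_
  simp [mul_comm]

/-- If a `{0,1}` sequence has at most one "rise", it is all zero or a single run. -/
lemma single_rise {m : ℕ} (β : ℕ → Fin 2) (hβ : ∀ t, m + 1 ≤ t → β t = 0)
    (hr : ∀ s t, (β s = 1 ∧ (s = 0 ∨ β (s-1) = 0)) → (β t = 1 ∧ (t = 0 ∨ β (t-1) = 0)) → s = t) :
    (∀ t, β t = 0) ∨ ∃ i ℓ, 1 ≤ ℓ ∧ i + ℓ ≤ m + 1 ∧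
      ∀ t, β t = if i ≤ t ∧ t < i + ℓ then 1 else 0 := by
  by_cases h0 : ∀ t, β t = 0
  · exact Or.inl h0
  push_neg at h0
  obtain ⟨t0, ht0⟩ := h0
  have hex : ∃ t, β t = 1 := by
    rcases fin2_cases (β t0) with h | h
    · exact absurd h ht0
    · exact ⟨t0, h⟩
  set i := Nat.find hex with hi_def
  have hi1 : β i = 1 := Nat.find_spec hex
  have hilt : ∀ t, t < i → β t = 0 := by
    intro t ht
    rcases fin2_cases (β t) with h | h
    · exact h
    · exact absurd h (Nat.find_min hex ht)
  have hrise_i : β i = 1 ∧ (i = 0 ∨ β (i-1) = 0) := by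
    refine ⟨hi1, ?_⟩
    rcases Nat.eq_zero_or_pos i with h | h
    · exact Or.inl h
    · exact Or.inr (hilt _ (by omega))
  have hdrop : ∃ d, β (i + d) = 0 := ⟨m+1, hβ _ (by omega)⟩
  set ℓ := Nat.find hdrop with hℓ_def
  have hℓ0 : β (i + ℓ) = 0 := Nat.find_spec hdrop
  have hones : ∀ d, d < ℓ → β (i + d) = 1 := by
    intro d hd
    rcases fin2_cases (β (i+d)) with h | h
    · exact absurd h (Nat.find_min hdrop hd)
    · exact h
  have hℓ1 : 1 ≤ ℓ := by
    by_contra h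
    have h0 : ℓ = 0 := by omega
    rw [h0, Nat.add_zero] at hℓ0
    rw [hi1] at hℓ0
    exact absurd hℓ0 (by decide)
  have hi_le : i ≤ m := by
    by_contra h
    have := hβ i (by omega)
    rw [hi1] at this
    exact absurd this (by decide)
  have hiℓ : i + ℓ ≤ m + 1 := by
    by_contra h
    have h1 : β (i + (ℓ - 1)) = 1 := hones _ (by omega)
    have h2 : β (i + (ℓ - 1)) = 0 := hβ _ (by omega)
    rw [h1] at h2; exact absurd h2 (by decide)
  have hafter : ∀ t, i + ℓ ≤ t → β t = 0 := by
    by_contra h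
    push_neg at h
    obtain ⟨t, ht1, ht2⟩ := h
    have hbad : ∃ t, i + ℓ ≤ t ∧ β t = 1 := by
      refine ⟨t, ht1, ?_⟩
      rcases fin2_cases (β t) with h | h
      · exact absurd h ht2
      · exact h
    set t1 := Nat.find hbad with ht1_def
    obtain ⟨ha, hb⟩ := Nat.find_spec hbad
    rw [← ht1_def] at ha hb
    have hne : t1 ≠ i + ℓ := by
      intro h
      rw [h] at hb
      rw [hb] at hℓ0
      exact absurd hℓ0 (by decide)
    have hgt : i + ℓ < t1 := lt_of_le_of_ne ha (Ne.symm hne)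
    have hprev : β (t1 - 1) = 0 := by
      have hmin := Nat.find_min hbad (show t1 - 1 < t1 by omega)
      rcases fin2_cases (β (t1-1)) with h | h
      · exact h
      · exact absurd (And.intro (show i + ℓ ≤ t1 - 1 by omega) h) hmin
    have := hr t1 i ⟨hb, Or.inr hprev⟩ hrise_i
    omega
  refine Or.inr ⟨i, ℓ, hℓ1, hiℓ, fun t => ?_⟩
  by_cases h1 : i ≤ t ∧ t < i + ℓ
  · rw [if_pos h1]
    have := hones (t - i) (by omega)
    rwa [Nat.add_sub_cancel' h1.1] at this
  · rw [if_neg h1]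
    rcases lt_or_ge t i with h | h
    · exact hilt t h
    · exact hafter t (by omega)

theorem stmt_9 (κ : ℝ) (hκ : κ ∈ Set.Icc (0:ℝ) 1) (m : ℕ) :
    (deriv (fun p => pb p κ m (fun _ => 0)) 0 = -((m : ℝ) * (1 - κ) + 1)) ∧
    (∀ i ℓ k : ℕ, 1 ≤ ℓ → i + ℓ + k = m + 1 →
      deriv (fun p => pb p κ m (run m i ℓ)) 0 =
        (1 - κ) ^ (2 - (if i = 0 then 1 else 0) - (if k = 0 then 1 else 0)) * κ ^ (ℓ - 1)) ∧
    (∀ b : Fin (m+1) → Fin 2, b ≠ (fun _ => 0) →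
      (¬ ∃ i ℓ k : ℕ, 1 ≤ ℓ ∧ i + ℓ + k = m + 1 ∧ b = run m i ℓ) →
      deriv (fun p => pb p κ m b) 0 = 0) := by
  refine ⟨?_, ?_, ?_⟩
  · -- all-zero string
    rw [deriv_pb]
    have hA : ∀ j : Fin (m+1), Af κ (fun _ => (0 : Fin 2)) j = 1 := by
      intro j
      induction j using Fin.cases with
      | zero => rw [Af_zero]; norm_num
      | succ t => rw [Af_succ]; norm_num
    have : ∀ j : Fin (m+1),
        Cf κ (fun _ => (0:Fin 2)) j * ∏ l ∈ Finset.univ.erase j, Af κ (fun _ => (0:Fin 2)) l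
        = Cf κ (fun _ => (0:Fin 2)) j := by
      intro j
      rw [Finset.prod_congr rfl (fun l _ => hA l), Finset.prod_const_one, mul_one]
    rw [Finset.sum_congr rfl (fun j _ => this j)]
    rw [Fin.sum_univ_succ]
    have h0 : Cf κ (fun _ => (0:Fin 2)) (0 : Fin (m+1)) = -1 := by rw [Cf_zero]; norm_num
    have hs : ∀ t : Fin m, Cf κ (fun _ => (0:Fin 2)) t.succ = -(1-κ) := by
      intro t; rw [Cf_succ]; norm_num
    rw [h0, Finset.sum_congr rfl (fun t _ => hs t), Finset.sum_const, Finset.card_univ,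
      Fintype.card_fin, nsmul_eq_mul]
    ring
  · -- single run
    intro i ℓ k hℓ hik
    rw [deriv_pb]
    set b : Fin (m+1) → Fin 2 := run m i ℓ with hb
    have him : i ≤ m := by omega
    set s : Fin (m+1) := ⟨i, by omega⟩ with hs_def
    have hbs : b s = 1 := by
      simp only [hb, run, hs_def]
      rw [if_pos (by constructor <;> omega)]
    have hAs : Af κ b s = 0 := by
      rcases Nat.eq_zero_or_pos i with h | h
      · have : s = 0 := by apply Fin.ext; simp [hs_def, h]
        rw [this] at hbs ⊢
        rw [Af_zero, if_pos hbs]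
      · have hm1 : i - 1 < m := by omega
        have hss : s = (⟨i-1, hm1⟩ : Fin m).succ := by apply Fin.ext; simp [hs_def]; omega
        rw [hss]
        rw [Af_succ]
        have hy : b (⟨i-1, hm1⟩ : Fin m).succ = 1 := by rw [← hss]; exact hbs
        have hx : b (⟨i-1, hm1⟩ : Fin m).castSucc = 0 := by
          simp only [hb, run]
          rw [if_neg]
          simp only [Fin.coe_castSucc]
          omega
        rw [hy, hx]
        norm_num
    rw [Finset.sum_eq_single s]
    rotate_left
    · intro j _ hj
      have hmem : s ∈ Finset.univ.erase j := Finset.mem_erase.mpr ⟨fun h => hj h.symm, Finset.mem_univ _⟩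
      rw [Finset.prod_eq_zero hmem hAs, mul_zero]
    · intro h; exact absurd (Finset.mem_univ s) h
    -- main term
    have hCs : Cf κ b s = if i = 0 then 1 else 1 - κ := by
      rcases Nat.eq_zero_or_pos i with h | h
      · have h0 : s = 0 := by apply Fin.ext; simp [hs_def, h]
        rw [h0] at hbs ⊢
        rw [Cf_zero, if_pos hbs, if_pos h]
      · have hm1 : i - 1 < m := by omega
        have hss : s = (⟨i-1, hm1⟩ : Fin m).succ := by apply Fin.ext; simp [hs_def]; omega
        rw [hss, Cf_succ]
        have hy : b (⟨i-1, hm1⟩ : Fin m).succ = 1 := by rw [← hss]; exact hbs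
        rw [hy, if_pos rfl, if_neg (by omega), mul_one]
    -- the product over the erased set
    set g : ℕ → ℝ := fun j =>
      (if j ∈ Finset.Ico (i+1) (i+ℓ) then κ else 1) * (if j = i + ℓ then 1 - κ else 1) with hg_def
    have hupdate : ∀ j : Fin (m+1), Function.update (Af κ b) s 1 j = g (j : ℕ) := by
      intro j
      rcases eq_or_ne j s with hjs | hjs
      · rw [hjs, Function.update_self]
        simp only [hg_def, hs_def, Fin.val_mk]
        rw [if_neg (by simp only [Finset.mem_Ico, not_and, not_lt, not_le]; omega), if_neg (by omega), mul_one]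
      · rw [Function.update_of_ne hjs]
        have hjv : (j : ℕ) ≠ i := by
          intro h; exact hjs (Fin.ext (by simp [hs_def, h]))
        obtain ⟨jv, hjvlt⟩ := j
        simp only [Fin.val_mk] at hjv ⊢
        match jv, hjvlt with
        | 0, _ =>
          rw [show (⟨0, by omega⟩ : Fin (m+1)) = 0 from rfl, Af_zero]
          have hb0 : b 0 = 0 := by
            simp only [hb, run]
            rw [if_neg (by simp only [Fin.val_zero]; omega)]
          rw [if_neg (by rw [hb0]; decide)]
          simp only [hg_def]
          rw [if_neg (by simp only [Finset.mem_Ico, not_and, not_lt, not_le]; omega), if_neg (by omega), mul_one]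
        | t+1, hlt =>
          have htm : t < m := by omega
          have hts : (⟨t+1, hlt⟩ : Fin (m+1)) = (⟨t, htm⟩ : Fin m).succ := rfl
          rw [hts, Af_succ]
          have hy : b (⟨t, htm⟩ : Fin m).succ
              = if i ≤ t+1 ∧ t+1 < i + ℓ then 1 else 0 := by
            simp only [hb, run, Fin.val_succ, Fin.val_mk]
          have hx : b (⟨t, htm⟩ : Fin m).castSucc
              = if i ≤ t ∧ t < i + ℓ then 1 else 0 := by
            simp only [hb, run, Fin.coe_castSucc, Fin.val_mk]
          have hne : t + 1 ≠ i := by simpa using hjv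
          simp only [hg_def]
          rcases lt_or_ge (t+1) i with hc1 | hc1
          · -- before the run
            have hy0 : b (⟨t, htm⟩ : Fin m).succ = 0 := by rw [hy, if_neg (by omega)]
            have hx0 : b (⟨t, htm⟩ : Fin m).castSucc = 0 := by rw [hx, if_neg (by omega)]
            rw [hy0, hx0, if_pos rfl, if_neg (by decide)]
            rw [if_neg (by simp only [Finset.mem_Ico, not_and, not_lt, not_le]; omega),
              if_neg (by omega)]
            ring
          · rcases lt_or_ge (t+1) (i+ℓ) with hc2 | hc2
            · -- inside the run (not the first position)
              have hy1 : b (⟨t, htm⟩ : Fin m).succ = 1 := by rw [hy, if_pos (by omega)]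
              have hx1 : b (⟨t, htm⟩ : Fin m).castSucc = 1 := by rw [hx, if_pos (by omega)]
              rw [hy1, hx1, if_pos rfl, if_pos rfl]
              rw [if_pos (by simp only [Finset.mem_Ico]; omega), if_neg (by omega)]
              ring
            · rcases eq_or_lt_of_le hc2 with hc3 | hc3
              · -- the drop 1 → 0
                have hy0 : b (⟨t, htm⟩ : Fin m).succ = 0 := by rw [hy, if_neg (by omega)]
                have hx1 : b (⟨t, htm⟩ : Fin m).castSucc = 1 := by rw [hx, if_pos (by omega)]
                rw [hy0, hx1, if_neg (by decide), if_neg (by decide)]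
                rw [if_neg (by simp only [Finset.mem_Ico, not_and, not_lt, not_le]; omega),
                  if_pos (by omega)]
                ring
              · -- after the run
                have hy0 : b (⟨t, htm⟩ : Fin m).succ = 0 := by rw [hy, if_neg (by omega)]
                have hx0 : b (⟨t, htm⟩ : Fin m).castSucc = 0 := by rw [hx, if_neg (by omega)]
                rw [hy0, hx0, if_pos rfl, if_neg (by decide)]
                rw [if_neg (by simp only [Finset.mem_Ico, not_and, not_lt, not_le]; omega),
                  if_neg (by omega)]
                ring
    have hprod : ∏ l ∈ Finset.univ.erase s, Af κ b l
        = κ ^ (ℓ - 1) * (if k = 0 then 1 else 1 - κ) := by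
      have h1 : ∏ j : Fin (m+1), Function.update (Af κ b) s 1 j
          = 1 * ∏ l ∈ Finset.univ \ {s}, Af κ b l :=
        Finset.prod_update_of_mem (Finset.mem_univ s) _ _
      rw [one_mul, Finset.sdiff_singleton_eq_erase] at h1
      rw [← h1]
      rw [Finset.prod_congr rfl (fun j _ => hupdate j)]
      have h2 : ∏ j : Fin (m+1), g (j : ℕ) = ∏ j ∈ Finset.range (m+1), g j :=
        Fin.prod_univ_eq_prod_range g (m+1)
      rw [h2]
      simp only [hg_def]
      rw [Finset.prod_mul_distrib]
      rw [Finset.prod_ite_mem, Finset.prod_ite_eq']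
      have hinter : Finset.range (m+1) ∩ Finset.Ico (i+1) (i+ℓ) = Finset.Ico (i+1) (i+ℓ) := by
        apply Finset.inter_eq_right.mpr
        intro x hx
        simp only [Finset.mem_Ico] at hx
        simp only [Finset.mem_range]
        omega
      rw [hinter, Finset.prod_const, Nat.card_Ico]
      congr 1
      · congr 1; omega
      · rcases Nat.eq_zero_or_pos k with hk | hk
        · rw [if_pos hk, if_neg (show ¬(i + ℓ ∈ Finset.range (m+1)) by
            simp only [Finset.mem_range, not_lt]; omega)]
        · rw [if_neg (show ¬(k = 0) by omega), if_pos (show i + ℓ ∈ Finset.range (m+1) by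
            simp only [Finset.mem_range]; omega)]
    rw [hCs, hprod]
    rcases Nat.eq_zero_or_pos i with hi | hi <;> rcases Nat.eq_zero_or_pos k with hk | hk
    · rw [if_pos hi, if_pos hk, if_pos hi, if_pos hk]
      norm_num
    · rw [if_pos hi, if_neg (by omega), if_pos hi, if_neg (by omega)]
      norm_num
      all_goals ring
    · rw [if_neg (by omega), if_pos hk, if_neg (by omega), if_pos hk]
      norm_num
      all_goals ring
    · rw [if_neg (by omega), if_neg (by omega), if_neg (by omega), if_neg (by omega)]
      norm_num
      all_goals ring
  · -- everything else vanishes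
    intro b hb0 hbrun
    rw [deriv_pb]
    set β : ℕ → Fin 2 := fun t => if h : t < m + 1 then b ⟨t, h⟩ else 0 with hβ_def
    have hβb : ∀ j : Fin (m+1), β (j : ℕ) = b j := by
      intro j
      simp only [hβ_def]
      rw [dif_pos j.isLt]
    -- a rise at position t gives a vanishing factor
    have hrise_zero : ∀ (t : ℕ) (ht : t < m + 1), β t = 1 → (t = 0 ∨ β (t-1) = 0) →
        Af κ b ⟨t, ht⟩ = 0 := by
      intro t htm h1 h0
      have ht0 : t = 0 ∨ (1 ≤ t ∧ β (t-1) = 0) := by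
        rcases h0 with h0 | h0
        · exact Or.inl h0
        · rcases Nat.eq_zero_or_pos t with h | h
          · exact Or.inl h
          · exact Or.inr ⟨h, h0⟩
      rcases ht0 with h0 | ⟨ht1, h0⟩
      · subst h0
        rw [show (⟨0, htm⟩ : Fin (m+1)) = 0 from rfl, Af_zero]
        rw [if_pos]
        rw [← hβb 0]; exact h1
      · have hm1 : t - 1 < m := by omega
        have hts : (⟨t, htm⟩ : Fin (m+1)) = (⟨t-1, hm1⟩ : Fin m).succ := by
          apply Fin.ext; simp; omega
        rw [hts, Af_succ]
        have hy : b (⟨t-1, hm1⟩ : Fin m).succ = 1 := by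
          rw [← hβb]
          have : ((⟨t-1, hm1⟩ : Fin m).succ : ℕ) = t := by simp; omega
          rw [this]; exact h1
        have hx : b (⟨t-1, hm1⟩ : Fin m).castSucc = 0 := by
          rw [← hβb]
          have : ((⟨t-1, hm1⟩ : Fin m).castSucc : ℕ) = t - 1 := by simp
          rw [this]; exact h0
        rw [hy, hx]
        rw [if_neg (by decide), if_pos rfl]
        ring
    -- there must be two distinct rises
    by_cases htwo : ∃ s t : ℕ, s ≠ t ∧
        (β s = 1 ∧ (s = 0 ∨ β (s-1) = 0)) ∧ (β t = 1 ∧ (t = 0 ∨ β (t-1) = 0))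
    · obtain ⟨s, t, hst, hs, ht⟩ := htwo
      have hsm : s ≤ m := by
        by_contra h
        have : β s = 0 := by simp only [hβ_def]; rw [dif_neg (by omega)]
        rw [hs.1] at this; exact absurd this (by decide)
      have htm : t ≤ m := by
        by_contra h
        have : β t = 0 := by simp only [hβ_def]; rw [dif_neg (by omega)]
        rw [ht.1] at this; exact absurd this (by decide)
      have hAs : Af κ b ⟨s, by omega⟩ = 0 := hrise_zero s (by omega) hs.1 hs.2
      have hAt : Af κ b ⟨t, by omega⟩ = 0 := hrise_zero t (by omega) ht.1 ht.2
      apply Finset.sum_eq_zero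
      intro j _
      rcases ne_or_eq j ⟨s, by omega⟩ with hj | hj
      · have hmem : (⟨s, by omega⟩ : Fin (m+1)) ∈ Finset.univ.erase j :=
          Finset.mem_erase.mpr ⟨fun h => hj h.symm, Finset.mem_univ _⟩
        rw [Finset.prod_eq_zero hmem hAs, mul_zero]
      · have hjt : j ≠ ⟨t, by omega⟩ := by
          rw [hj]; intro h
          exact hst (by simpa using congrArg Fin.val h)
        have hmem : (⟨t, by omega⟩ : Fin (m+1)) ∈ Finset.univ.erase j :=
          Finset.mem_erase.mpr ⟨fun h => hjt h.symm, Finset.mem_univ _⟩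
        rw [Finset.prod_eq_zero hmem hAt, mul_zero]
    · push_neg at htwo
      exfalso
      have hr : ∀ s t : ℕ, (β s = 1 ∧ (s = 0 ∨ β (s-1) = 0)) →
          (β t = 1 ∧ (t = 0 ∨ β (t-1) = 0)) → s = t := by
        intro s t hs ht
        by_contra h
        have hc := htwo s t h hs ht.1
        rcases ht.2 with h' | h'
        · exact hc.1 h'
        · exact hc.2 h'
      have hβbound : ∀ t, m + 1 ≤ t → β t = 0 := by
        intro t ht
        simp only [hβ_def]
        rw [dif_neg (by omega)]
      rcases single_rise β hβbound hr with hall | ⟨i, ℓ, h1, h2, h3⟩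
      · apply hb0
        funext j
        rw [← hβb j, hall]
      · apply hbrun
        refine ⟨i, ℓ, m + 1 - i - ℓ, h1, by omega, ?_⟩
        funext j
        rw [← hβb j, h3]
        simp only [run]
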